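/- Let 𝒞 be a ℤ/2-graded symmetric monoidal additive category (Koszul signs) with finite direct sums, let Y be an object with a dual, let L₁,…,L_p be even invertible objects and L_{p+1},…,L_{p+q} odd invertible objects, and set X = L₁ ⊕ ⋯ ⊕ L_{p+q} ⊕ Y. If the Young symmetrizer S_X^{(q+1,p+1)} (symmetrize along rows, then antisymmetrize along columns, of the rectangular (p+1)×(q+1) tableau) is the zero endomorphism of X^{⊗(p+1)(q+1)}, then Y ≅ 0. -/

import Mathlib

open CategoryTheory CategoryTheory.Limits CategoryTheory.MonoidalCategory

/-- The iterated tensor product `X 0 ⊗ X 1 ⊗ ⋯ ⊗ X (m-1)` of a finite family of objects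
in a monoidal category. -/
def tObj {C : Type*} [Category C] [MonoidalCategory C] :
    ∀ {m : ℕ}, (Fin m → C) → C
  | 0, _ => 𝟙_ C
  | m + 1, X => tObj (fun i => X i.castSucc) ⊗ X (Fin.last m)

/-- The iterated tensor product of a finite family of morphisms. -/
def tHom {C : Type*} [Category C] [MonoidalCategory C] :
    ∀ {m : ℕ} {X Y : Fin m → C}, (∀ i, X i ⟶ Y i) → (tObj X ⟶ tObj Y)
  | 0, _, _, _ => 𝟙 _
  | m + 1, _, _, f => tensorHom (tHom fun i => f i.castSucc) (f (Fin.last m))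

/-- The label of box `i` of the rectangular `(p+1) × (q+1)` tableau (listed row by row):
box `(r, c)` gets the anti-diagonal label `r + c ∈ Fin (p+q+1)`; the last label `p + q`
is attained exactly at the distinguished box `(p, q)`. -/
def lab (p q : ℕ) (i : Fin ((p + 1) * (q + 1))) : Fin (p + q + 1) :=
  ⟨(i : ℕ) / (q + 1) + (i : ℕ) % (q + 1), by
    have h1 : (i : ℕ) / (q + 1) < p + 1 :=
      (Nat.div_lt_iff_lt_mul (Nat.succ_pos q)).2 i.isLt
    have h2 : (i : ℕ) % (q + 1) < q + 1 := Nat.mod_lt _ (Nat.succ_pos q)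
    omega⟩
section AuxLemmas

variable {C : Type*} [Category C] [MonoidalCategory C]

lemma tHom_id : ∀ {m : ℕ} (X : Fin m → C), tHom (fun i => 𝟙 (X i)) = 𝟙 (tObj X)
  | 0, _ => rfl
  | m + 1, X => by
      show tensorHom (tHom fun i => 𝟙 (X i.castSucc)) (𝟙 _) = _
      rw [tHom_id (fun i => X i.castSucc)]
      exact MonoidalCategory.id_tensorHom_id _ _

lemma tHom_comp : ∀ {m : ℕ} {X Y W : Fin m → C} (f : ∀ i, X i ⟶ Y i) (g : ∀ i, Y i ⟶ W i),
    tHom f ≫ tHom g = tHom (fun i => f i ≫ g i)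
  | 0, _, _, _, _, _ => Category.comp_id _
  | m + 1, X, Y, W, f, g => by
      show tensorHom _ _ ≫ tensorHom _ _ = tensorHom _ _
      rw [MonoidalCategory.tensorHom_comp_tensorHom, tHom_comp]

lemma tHom_zero [Preadditive C] [MonoidalPreadditive C] :
    ∀ {m : ℕ} {X Y : Fin m → C} (f : ∀ i, X i ⟶ Y i) (j : Fin m), f j = 0 → tHom f = 0
  | m + 1, X, Y, f, j, hj => by
      show tensorHom (tHom fun i => f i.castSucc) (f (Fin.last m)) = 0
      rcases Fin.eq_castSucc_or_eq_last j with ⟨j', rfl⟩ | rfl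
      · rw [tHom_zero _ j' hj, MonoidalCategory.tensorHom_def]
        simp
      · rw [hj, MonoidalCategory.tensorHom_def]
        simp

lemma tObj_cast {m m' : ℕ} (e : m' = m) (X : Fin m → C) :
    tObj (fun i => X (Fin.cast e i)) = tObj X := by subst e; rfl

variable [Preadditive C] [SymmetricCategory C] [MonoidalPreadditive C]

lemma isZero_tensor_left (A X : C) (h : IsZero X) : IsZero (A ⊗ X) := by
  rw [IsZero.iff_id_eq_zero] at h ⊢
  rw [← MonoidalCategory.whiskerLeft_id, h, MonoidalPreadditive.whiskerLeft_zero]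

lemma isZero_of_inv_tensor (A A' X : C) (h : Nonempty (A ⊗ A' ≅ 𝟙_ C))
    (hz : IsZero (A ⊗ X)) : IsZero X := by
  have h1 : IsZero (A' ⊗ (A ⊗ X)) := isZero_tensor_left _ _ hz
  have h2 : IsZero ((A' ⊗ A) ⊗ X) := h1.of_iso (α_ A' A X)
  have h3 : IsZero (𝟙_ C ⊗ X) :=
    h2.of_iso (tensorIso (((β_ A' A).trans h.some).symm) (Iso.refl X))
  exact h3.of_iso (λ_ X).symm

lemma isZero_of_tObj_tensor : ∀ (m : ℕ) (g : Fin m → C)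
    (_ : ∀ i, ∃ g', Nonempty (g i ⊗ g' ≅ 𝟙_ C)) (X : C),
    IsZero (tObj g ⊗ X) → IsZero X
  | 0, g, hg, X, hz => hz.of_iso (λ_ X).symm
  | m + 1, g, hg, X, hz => by
      have hz' : IsZero (tObj (fun i => g i.castSucc) ⊗ (g (Fin.last m) ⊗ X)) :=
        IsZero.of_iso hz (α_ _ _ _).symm
      obtain ⟨g', hg'⟩ := hg (Fin.last m)
      exact isZero_of_inv_tensor _ g' _ hg'
        (isZero_of_tObj_tensor m (fun i => g i.castSucc) (fun i => hg i.castSucc) _ hz')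

end AuxLemmas

lemma combi (p q : ℕ) (σ τ : Equiv.Perm (Fin ((p+1)*(q+1))))
    (hσ : ∀ i, ((σ i : ℕ) / (q+1) = (i:ℕ)/(q+1)))
    (hτ : ∀ i, ((τ i : ℕ) % (q+1) = (i:ℕ)%(q+1)))
    (hl : ∀ i, lab p q (τ (σ i)) = lab p q i) : σ = 1 ∧ τ = 1 := by
  have hl' : ∀ i : Fin ((p+1)*(q+1)),
      ((τ (σ i) : ℕ)) / (q+1) + ((τ (σ i) : ℕ)) % (q+1) = (i:ℕ)/(q+1) + (i:ℕ)%(q+1) := by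
    intro i
    have := congrArg Fin.val (hl i)
    simpa [lab] using this
  set c : Fin ((p+1)*(q+1)) → ℤ := fun i => (((i:ℕ) % (q+1) : ℕ) : ℤ) with hc
  set r : Fin ((p+1)*(q+1)) → ℤ := fun i => (((i:ℕ) / (q+1) : ℕ) : ℤ) with hr
  have hrσ : ∀ i, r (σ i) = r i := fun i => by
    simp only [hr]; exact congrArg (fun x : ℕ => (x : ℤ)) (hσ i)
  have hcτ : ∀ i, c (τ i) = c i := fun i => by
    simp only [hc]; exact congrArg (fun x : ℕ => (x : ℤ)) (hτ i)
  have hrτσ : ∀ i, r (τ (σ i)) = r i + c i - c (σ i) := by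
    intro i
    have h1 := hl' i
    rw [hτ (σ i)] at h1
    simp only [hr, hc]
    omega
  have E1 : ∑ i, c (τ (σ i)) * r (τ (σ i)) = ∑ i, c i * r i :=
    Equiv.sum_comp (σ.trans τ) (fun j => c j * r j)
  have E2 : ∑ i, c (σ i) * r i = ∑ i, c i * r i := by
    calc ∑ i, c (σ i) * r i = ∑ i, c (σ i) * r (σ i) :=
          Finset.sum_congr rfl (fun i _ => by rw [hrσ])
      _ = ∑ i, c i * r i := Equiv.sum_comp σ (fun j => c j * r j)
  have E3 : ∑ i, c (σ i) ^ 2 = ∑ i, c i ^ 2 := Equiv.sum_comp σ (fun j => c j ^ 2)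
  have E1' : ∑ i, (c (σ i) * r i + c (σ i) * c i - c (σ i) ^ 2) = ∑ i, c i * r i := by
    rw [← E1]
    refine Finset.sum_congr rfl fun i _ => ?_
    rw [hcτ (σ i), hrτσ i]; ring
  rw [Finset.sum_sub_distrib, Finset.sum_add_distrib] at E1'
  have E4 : ∑ i, c (σ i) * c i = ∑ i, c i ^ 2 := by linarith
  have E5 : ∑ i, (c (σ i) - c i) ^ 2
      = (∑ i, c (σ i) ^ 2) - 2 * (∑ i, c (σ i) * c i) + ∑ i, c i ^ 2 := by
    rw [Finset.mul_sum, ← Finset.sum_sub_distrib, ← Finset.sum_add_distrib]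
    exact Finset.sum_congr rfl fun i _ => by ring
  rw [E3, E4] at E5
  have E5' : ∑ i, (c (σ i) - c i) ^ 2 = 0 := by rw [E5]; ring
  have hzero : ∀ i, c (σ i) = c i := by
    intro i
    have h := (Finset.sum_eq_zero_iff_of_nonneg (fun i _ => sq_nonneg (c (σ i) - c i))).1 E5' i
      (Finset.mem_univ i)
    have := pow_eq_zero_iff (n := 2) (by norm_num) |>.1 h
    linarith [this]
  have hσ1 : σ = 1 := by
    ext i
    simp only [Equiv.Perm.one_apply]
    have hcv : (σ i : ℕ) % (q+1) = (i : ℕ) % (q+1) := by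
      have := hzero i
      simp only [hc] at this
      exact_mod_cast this
    have h3 := hσ i
    rw [← Nat.div_add_mod (σ i : ℕ) (q+1), ← Nat.div_add_mod (i : ℕ) (q+1), hcv, h3]
  refine ⟨hσ1, ?_⟩
  ext i
  have h0 := hl' i
  rw [hσ1] at h0
  simp only [Equiv.Perm.one_apply] at h0 ⊢
  have hcv := hτ i
  have hdv : (τ i : ℕ) / (q+1) = (i : ℕ) / (q+1) := by omega
  rw [← Nat.div_add_mod (τ i : ℕ) (q+1), ← Nat.div_add_mod (i : ℕ) (q+1), hcv, hdv]

/-- Proposition `non-zero_detection` (Coulembier): let `C` be a ℤ/2-graded symmetric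
monoidal additive category (the grading is recorded through the braiding being `±𝟙` on
the invertible objects `L k`), let `Y` have a (left) dual, let `L 0, …, L (p-1)` be even
invertible objects and `L p, …, L (p+q-1)` odd invertible objects, and set
`X = L 0 ⊕ ⋯ ⊕ L (p+q-1) ⊕ Y`.  Let `ρ` be the symmetry action of `Σ_{(p+1)(q+1)}` on
`X^{⊗(p+1)(q+1)}` (characterized through the permutation isomorphisms `P` on the tensor
product of the labelled tableau, hypothesis `hcompat`).  If the Young symmetrizer
`S_X^{(q+1,p+1)}` — symmetrize along rows, then antisymmetrize along columns of the
rectangular `(p+1) × (q+1)` tableau — vanishes, then `Y ≅ 0`. -/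
theorem nonzero_detection
    {C : Type*} [Category C] [Preadditive C] [MonoidalCategory C] [SymmetricCategory C]
    [MonoidalPreadditive C] [HasFiniteBiproducts C]
    (p q : ℕ) (L : Fin (p + q) → C) (Y : C) [HasLeftDual Y]
    (hLinv : ∀ k, ∃ L' : C, Nonempty (L k ⊗ L' ≅ 𝟙_ C))
    (heven : ∀ k : Fin (p + q), (k : ℕ) < p → (β_ (L k) (L k)).hom = 𝟙 _)
    (hodd : ∀ k : Fin (p + q), p ≤ (k : ℕ) → (β_ (L k) (L k)).hom = -𝟙 _)
    (Z : Fin (p + q + 1) → C) (hZ : Z = Fin.snoc L Y)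
    (ρ : Equiv.Perm (Fin ((p + 1) * (q + 1))) →
      ((tObj fun _ : Fin ((p + 1) * (q + 1)) => ⨁ Z) ⟶
        (tObj fun _ : Fin ((p + 1) * (q + 1)) => ⨁ Z)))
    (hρ1 : ρ 1 = 𝟙 _)
    (hρmul : ∀ σ τ, ρ (τ * σ) = ρ σ ≫ ρ τ)
    (P : ∀ σ : Equiv.Perm (Fin ((p + 1) * (q + 1))),
      tObj (fun i => Z (lab p q i)) ≅ tObj (fun i => Z (lab p q (σ i))))
    (hcompat : ∀ σ,
      tHom (fun i => biproduct.ι Z (lab p q i)) ≫ ρ σ =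
        (P σ).hom ≫ tHom (fun i => biproduct.ι Z (lab p q (σ i))))
    (hS : (∑ σ ∈ Finset.univ.filter
            (fun σ : Equiv.Perm (Fin ((p + 1) * (q + 1))) =>
              ∀ i, ((σ i : ℕ) / (q + 1) = (i : ℕ) / (q + 1))), ρ σ) ≫
          (∑ τ ∈ Finset.univ.filter
            (fun τ : Equiv.Perm (Fin ((p + 1) * (q + 1))) =>
              ∀ i, ((τ i : ℕ) % (q + 1) = (i : ℕ) % (q + 1))),
            (Equiv.Perm.sign τ : ℤ) • ρ τ) = 0) :
    IsZero Y := by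

  set ι := tHom (fun i => biproduct.ι Z (lab p q i)) with hιdef
  set π := tHom (fun i => biproduct.π Z (lab p q i)) with hπdef
  have key : ∀ σ τ : Equiv.Perm (Fin ((p+1)*(q+1))),
      ι ≫ ρ σ ≫ ρ τ ≫ π =
        (P (τ*σ)).hom ≫
          tHom (fun i => biproduct.ι Z (lab p q ((τ*σ) i)) ≫ biproduct.π Z (lab p q i)) := by
    intro σ τ
    calc ι ≫ ρ σ ≫ ρ τ ≫ π = (ι ≫ ρ (τ*σ)) ≫ π := by
          rw [hρmul σ τ]; simp only [Category.assoc]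
      _ = (P (τ*σ)).hom ≫ tHom (fun i => biproduct.ι Z (lab p q ((τ*σ) i))) ≫ π := by
          rw [hcompat (τ*σ), Category.assoc]
      _ = _ := by rw [hπdef, tHom_comp]
  have h1R : (1 : Equiv.Perm (Fin ((p+1)*(q+1)))) ∈ Finset.univ.filter
      (fun σ : Equiv.Perm (Fin ((p + 1) * (q + 1))) =>
        ∀ i, ((σ i : ℕ) / (q + 1) = (i : ℕ) / (q + 1))) := by
    simp
  have h1C : (1 : Equiv.Perm (Fin ((p+1)*(q+1)))) ∈ Finset.univ.filter
      (fun τ : Equiv.Perm (Fin ((p + 1) * (q + 1))) =>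
        ∀ i, ((τ i : ℕ) % (q + 1) = (i : ℕ) % (q + 1))) := by
    simp
  have vanish : ∀ σ ∈ Finset.univ.filter
      (fun σ : Equiv.Perm (Fin ((p + 1) * (q + 1))) =>
        ∀ i, ((σ i : ℕ) / (q + 1) = (i : ℕ) / (q + 1))),
      ∀ τ ∈ Finset.univ.filter
      (fun τ : Equiv.Perm (Fin ((p + 1) * (q + 1))) =>
        ∀ i, ((τ i : ℕ) % (q + 1) = (i : ℕ) % (q + 1))),
      ¬(σ = 1 ∧ τ = 1) →
        (Equiv.Perm.sign τ : ℤ) • (ι ≫ ρ σ ≫ ρ τ ≫ π) = 0 := by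
    intro σ hσm τ hτm hne
    have hσ' := (Finset.mem_filter.1 hσm).2
    have hτ' := (Finset.mem_filter.1 hτm).2
    obtain ⟨i, hi⟩ : ∃ i, lab p q ((τ*σ) i) ≠ lab p q i := by
      by_contra hcon
      push_neg at hcon
      exact hne (combi p q σ τ hσ' hτ' (fun i => hcon i))
    rw [key σ τ, tHom_zero _ i (biproduct.ι_π_ne Z hi), comp_zero, smul_zero]
  have hid : 𝟙 (tObj fun i => Z (lab p q i)) = 0 := by
    have h0 := congrArg (fun f => ι ≫ f ≫ π) hS
    simp only [zero_comp, comp_zero, Preadditive.sum_comp, Preadditive.comp_sum,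
      Preadditive.comp_zsmul, Preadditive.zsmul_comp, Category.assoc] at h0
    simp only [Finset.smul_sum] at h0
    rw [Finset.sum_eq_single_of_mem (1 : Equiv.Perm (Fin ((p+1)*(q+1)))) h1C
        (fun τ hτm hne => Finset.sum_eq_zero fun σ hσm => vanish σ hσm τ hτm (fun h => hne h.2)),
      Finset.sum_eq_single_of_mem (1 : Equiv.Perm (Fin ((p+1)*(q+1)))) h1R
        (fun σ hσm hne => vanish σ hσm 1 h1C (fun h => hne h.1))] at h0
    rw [hρ1] at h0
    simp only [Equiv.Perm.sign_one, Units.val_one, one_smul, Category.id_comp] at h0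
    rw [hιdef, hπdef, tHom_comp] at h0
    have hfun : (fun i => biproduct.ι Z (lab p q i) ≫ biproduct.π Z (lab p q i))
        = fun i : Fin ((p+1)*(q+1)) => 𝟙 (Z (lab p q i)) :=
      funext fun i => biproduct.ι_π_self Z _
    rw [hfun, tHom_id] at h0
    exact h0
  have hW : IsZero (tObj fun i => Z (lab p q i)) := by
    rw [IsZero.iff_id_eq_zero]
    exact hid
  have hpos : 0 < (p+1)*(q+1) := Nat.mul_pos (Nat.succ_pos p) (Nat.succ_pos q)
  have hMform : (p+1)*(q+1) = (q+1)*p + q + 1 := by ring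
  set M := (p+1)*(q+1) - 1 with hM
  have e : M + 1 = (p+1)*(q+1) := Nat.succ_pred_eq_of_pos hpos
  have hWg : IsZero (tObj (fun i : Fin (M+1) => Z (lab p q (Fin.cast e i)))) := by
    rw [tObj_cast e (fun i => Z (lab p q i))]
    exact hW
  have hinvs : ∀ i : Fin M, ∃ g', Nonempty
      (Z (lab p q (Fin.cast e (Fin.castSucc i))) ⊗ g' ≅ 𝟙_ C) := by
    intro i
    set j : Fin ((p+1)*(q+1)) := Fin.cast e (Fin.castSucc i) with hj
    have hlt : (lab p q j : ℕ) < p + q := by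
      have hval : (lab p q j : ℕ) = (j:ℕ)/(q+1) + (j:ℕ)%(q+1) := rfl
      have h1 : (j:ℕ)/(q+1) < p + 1 := (Nat.div_lt_iff_lt_mul (Nat.succ_pos q)).2 j.isLt
      have h2 : (j:ℕ)%(q+1) < q + 1 := Nat.mod_lt _ (Nat.succ_pos q)
      have hdm := Nat.div_add_mod (j:ℕ) (q+1)
      have hjlt : (j:ℕ) < M := i.isLt
      by_contra hcon
      push_neg at hcon
      rw [hval] at hcon
      have ha : (j:ℕ)/(q+1) = p := by omega
      have hb : (j:ℕ)%(q+1) = q := by omega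
      rw [ha, hb] at hdm
      omega
    have hk : lab p q j = Fin.castSucc (⟨(lab p q j : ℕ), hlt⟩ : Fin (p+q)) := rfl
    obtain ⟨L', hL'⟩ := hLinv ⟨(lab p q j : ℕ), hlt⟩
    refine ⟨L', ?_⟩
    rw [hk, hZ, Fin.snoc_castSucc]
    exact hL'
  have hlast : Z (lab p q (Fin.cast e (Fin.last M))) = Y := by
    have hval : ((Fin.cast e (Fin.last M) : Fin ((p+1)*(q+1))) : ℕ) = (q+1)*p + q := by
      show M = (q+1)*p + q
      omega
    have hlab : lab p q (Fin.cast e (Fin.last M)) = Fin.last (p+q) := by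
      apply Fin.ext
      show ((Fin.cast e (Fin.last M) : Fin ((p+1)*(q+1))) : ℕ)/(q+1)
          + ((Fin.cast e (Fin.last M) : Fin ((p+1)*(q+1))) : ℕ)%(q+1) = p + q
      rw [hval, Nat.mul_add_div (Nat.succ_pos q), Nat.mul_add_mod,
        Nat.div_eq_of_lt (Nat.lt_succ_self q), Nat.mod_eq_of_lt (Nat.lt_succ_self q)]
      omega
    rw [hlab, hZ, Fin.snoc_last]
  have hYzero := isZero_of_tObj_tensor M (fun i => Z (lab p q (Fin.cast e (Fin.castSucc i))))
    hinvs (Z (lab p q (Fin.cast e (Fin.last M)))) hWg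
  rwa [hlast] at hYzero
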